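/- Let K be an infinite field, let n ≥ 1, and let 1 ≤ r < n. If f is a multilinear polynomial of degree m whose image on UT_n(K) equals J^r, then f is a polynomial identity of UT_r(K) and f is not a polynomial identity of UT_{r+1}(K). -/

import Mathlib

/-- Evaluation of the multilinear polynomial `∑ σ, α σ • x_{σ(1)} ⋯ x_{σ(m)}`
at the tuple `a` of elements of the `K`-algebra `A`. -/
noncomputable def mEval {K A : Type*} [Field K] [Ring A] [Algebra K A]
    {m : ℕ} (α : Equiv.Perm (Fin m) → K) (a : Fin m → A) : A :=
  ∑ σ : Equiv.Perm (Fin m), α σ • (List.ofFn fun i => a (σ i)).prod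

/-- `M` is an upper triangular matrix, i.e. an element of `UT_n(K)`. -/
def IsUT {K : Type*} [Field K] {n : ℕ} (M : Matrix (Fin n) (Fin n) K) : Prop :=
  ∀ i j : Fin n, (j : ℕ) < (i : ℕ) → M i j = 0

/-- `M` lies in `J^r`, the `r`-th power of the Jacobson radical of `UT_n(K)`:
all entries `M i j` with `j - i < r` vanish (`J^0 = UT_n(K)`). -/
def InJpow {K : Type*} [Field K] {n : ℕ} (r : ℕ) (M : Matrix (Fin n) (Fin n) K) : Prop :=
  ∀ i j : Fin n, (j : ℕ) < (i : ℕ) + r → M i j = 0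

section Aux
variable {K : Type*} [Field K] {r n : ℕ}

lemma sum_fin_eq (h : r ≤ n) (g : Fin n → K) (hg : ∀ k : Fin n, r ≤ (k:ℕ) → g k = 0) :
    ∑ k, g k = ∑ k : Fin r, g (Fin.castLE h k) := by
  classical
  have hmap := Finset.sum_map (Finset.univ : Finset (Fin r))
    ⟨Fin.castLE h, Fin.castLE_injective h⟩ g
  simp only [Function.Embedding.coeFn_mk] at hmap
  rw [← hmap]
  refine (Finset.sum_subset (Finset.subset_univ _) ?_).symm
  intro x _ hx
  refine hg x ?_
  by_contra hlt
  exact hx (Finset.mem_map.mpr ⟨⟨(x:ℕ), Nat.lt_of_not_le hlt⟩, Finset.mem_univ _, by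
    apply Fin.ext; simp⟩)

lemma isUT_one : IsUT (1 : Matrix (Fin n) (Fin n) K) := by
  intro i j hij
  exact Matrix.one_apply_ne (by intro h; subst h; omega)

lemma isUT_mul {A B : Matrix (Fin n) (Fin n) K} (hA : IsUT A) (hB : IsUT B) :
    IsUT (A * B) := by
  intro i j hij
  rw [Matrix.mul_apply]
  refine Finset.sum_eq_zero fun k _ => ?_
  rcases lt_or_ge (k : ℕ) (i : ℕ) with hk | hk
  · rw [hA i k hk, zero_mul]
  · rw [hB k j (by omega), mul_zero]

lemma isUT_prod {l : List (Matrix (Fin n) (Fin n) K)} (hl : ∀ x ∈ l, IsUT x) :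
    IsUT l.prod := by
  induction l with
  | nil => simpa using isUT_one
  | cons x xs ih =>
    rw [List.prod_cons]
    exact isUT_mul (hl x (by simp)) (ih fun y hy => hl y (by simp [hy]))

/-- zero-padded embedding of `r × r` matrices into the top-left block. -/
def emb (h : r ≤ n) (M : Matrix (Fin r) (Fin r) K) : Matrix (Fin n) (Fin n) K :=
  fun i j => if hij : (i : ℕ) < r ∧ (j : ℕ) < r then M ⟨i, hij.1⟩ ⟨j, hij.2⟩ else 0

lemma emb_castLE (h : r ≤ n) (M : Matrix (Fin r) (Fin r) K) (i j : Fin r) :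
    emb h M (Fin.castLE h i) (Fin.castLE h j) = M i j := by
  simp [emb, i.isLt, j.isLt]

lemma emb_isUT (h : r ≤ n) {M : Matrix (Fin r) (Fin r) K} (hM : IsUT M) :
    IsUT (emb h M) := by
  intro i j hij
  unfold emb
  split
  · exact hM _ _ hij
  · rfl

lemma emb_add (h : r ≤ n) (A B : Matrix (Fin r) (Fin r) K) :
    emb h (A + B) = emb h A + emb h B := by
  funext i j
  rw [Matrix.add_apply]
  unfold emb
  by_cases hij : (i : ℕ) < r ∧ (j : ℕ) < r <;> simp [hij, Matrix.add_apply]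

lemma emb_smul (h : r ≤ n) (c : K) (A : Matrix (Fin r) (Fin r) K) :
    emb h (c • A) = c • emb h A := by
  funext i j
  rw [Matrix.smul_apply]
  unfold emb
  by_cases hij : (i : ℕ) < r ∧ (j : ℕ) < r <;> simp [hij, Matrix.smul_apply]

lemma emb_sum (h : r ≤ n) {ι : Type*} (s : Finset ι) (f : ι → Matrix (Fin r) (Fin r) K) :
    emb h (∑ x ∈ s, f x) = ∑ x ∈ s, emb h (f x) := by
  classical
  induction s using Finset.induction with
  | empty => funext i j; simp [emb]
  | insert _ _ hx ih => simp [Finset.sum_insert hx, emb_add, ih]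

lemma emb_mul (h : r ≤ n) (A B : Matrix (Fin r) (Fin r) K) :
    emb h (A * B) = emb h A * emb h B := by
  funext i j
  rw [Matrix.mul_apply]
  by_cases hij : (i : ℕ) < r ∧ (j : ℕ) < r
  · have hzero : ∀ k : Fin n, r ≤ (k : ℕ) → emb h A i k * emb h B k j = 0 := by
      intro k hk
      have : emb h A i k = 0 := by unfold emb; rw [dif_neg (by omega)]
      rw [this, zero_mul]
    rw [sum_fin_eq h _ hzero]
    unfold emb
    rw [dif_pos hij, Matrix.mul_apply]
    refine Finset.sum_congr rfl fun k _ => ?_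
    have hk : ((Fin.castLE h k : Fin n) : ℕ) < r := k.isLt
    rw [dif_pos ⟨hij.1, hk⟩, dif_pos ⟨hk, hij.2⟩]
    congr 1
  · conv_lhs => rw [emb]
    rw [dif_neg hij]
    refine (Finset.sum_eq_zero fun k _ => ?_).symm
    rcases not_and_or.mp hij with hi | hj
    · have : emb h A i k = 0 := by unfold emb; rw [dif_neg (by tauto)]
      rw [this, zero_mul]
    · have : emb h B k j = 0 := by unfold emb; rw [dif_neg (by tauto)]
      rw [this, mul_zero]

lemma emb_prod (h : r ≤ n) {l : List (Matrix (Fin r) (Fin r) K)} (hl : l ≠ []) :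
    (l.map (emb h)).prod = emb h l.prod := by
  induction l with
  | nil => exact absurd rfl hl
  | cons x xs ih =>
    rcases eq_or_ne xs [] with h' | h'
    · subst h'; simp
    · rw [List.map_cons, List.prod_cons, List.prod_cons, ih h', emb_mul]

/-- projection onto the top-left `s × s` block. -/
def proj (h : r ≤ n) (M : Matrix (Fin n) (Fin n) K) : Matrix (Fin r) (Fin r) K :=
  fun i j => M (Fin.castLE h i) (Fin.castLE h j)

lemma proj_one (h : r ≤ n) : proj h (1 : Matrix (Fin n) (Fin n) K) = 1 := by
  funext i j
  simp [proj, Matrix.one_apply, Fin.ext_iff]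

lemma proj_isUT (h : r ≤ n) {M : Matrix (Fin n) (Fin n) K} (hM : IsUT M) :
    IsUT (proj h M) := fun i j hij => hM _ _ hij

lemma proj_add (h : r ≤ n) (A B : Matrix (Fin n) (Fin n) K) :
    proj h (A + B) = proj h A + proj h B := rfl

lemma proj_smul (h : r ≤ n) (c : K) (A : Matrix (Fin n) (Fin n) K) :
    proj h (c • A) = c • proj h A := rfl

lemma proj_sum (h : r ≤ n) {ι : Type*} (s : Finset ι) (f : ι → Matrix (Fin n) (Fin n) K) :
    proj h (∑ x ∈ s, f x) = ∑ x ∈ s, proj h (f x) := by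
  classical
  induction s using Finset.induction with
  | empty => funext i j; simp [proj]
  | insert _ _ hx ih => simp [Finset.sum_insert hx, proj_add, ih]

lemma proj_mul (h : r ≤ n) (A B : Matrix (Fin n) (Fin n) K) (hB : IsUT B) :
    proj h (A * B) = proj h A * proj h B := by
  funext i j
  show (A * B) _ _ = _
  rw [Matrix.mul_apply, Matrix.mul_apply]
  have hzero : ∀ k : Fin n, r ≤ (k : ℕ) → A (Fin.castLE h i) k * B k (Fin.castLE h j) = 0 := by
    intro k hk
    rw [hB k (Fin.castLE h j) (by simpa using lt_of_lt_of_le j.isLt hk), mul_zero]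
  rw [sum_fin_eq h _ hzero]
  rfl

lemma proj_prod (h : r ≤ n) {l : List (Matrix (Fin n) (Fin n) K)}
    (hl : ∀ x ∈ l, IsUT x) : (l.map (proj h)).prod = proj h l.prod := by
  induction l with
  | nil => simp [proj_one]
  | cons x xs ih =>
    rw [List.map_cons, List.prod_cons, List.prod_cons,
      ih fun y hy => hl y (by simp [hy]),
      proj_mul h _ _ (isUT_prod fun y hy => hl y (by simp [hy]))]

end Aux

section Main
variable {K : Type*} [Field K] {r n : ℕ}

lemma mEval_emb {m : ℕ} (hm : 1 ≤ m) (h : r ≤ n) (α : Equiv.Perm (Fin m) → K)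
    (a : Fin m → Matrix (Fin r) (Fin r) K) :
    mEval α (fun l => emb h (a l)) = emb h (mEval α a) := by
  unfold mEval
  rw [emb_sum]
  refine Finset.sum_congr rfl fun σ _ => ?_
  rw [emb_smul]
  congr 1
  have hmap : (List.ofFn fun i => emb h (a (σ i)))
      = (List.ofFn fun i => a (σ i)).map (emb h) := by
    rw [List.map_ofFn]; rfl
  rw [hmap, emb_prod h]
  intro hnil
  have := congrArg List.length hnil
  simp at this
  omega

lemma mEval_proj {m : ℕ} (h : r ≤ n) (α : Equiv.Perm (Fin m) → K)
    (a : Fin m → Matrix (Fin n) (Fin n) K) (ha : ∀ l, IsUT (a l)) :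
    mEval α (fun l => proj h (a l)) = proj h (mEval α a) := by
  unfold mEval
  rw [proj_sum]
  refine Finset.sum_congr rfl fun σ _ => ?_
  rw [proj_smul]
  congr 1
  have hmap : (List.ofFn fun i => proj h (a (σ i)))
      = (List.ofFn fun i => a (σ i)).map (proj h) := by
    rw [List.map_ofFn]; rfl
  rw [hmap, proj_prod h]
  intro x hx
  obtain ⟨i, rfl⟩ := List.mem_ofFn.mp hx
  exact ha _

end Main

/-- If the image of a multilinear polynomial `f` on `UT_n(K)` equals `J^r`
(`K` infinite, `1 ≤ r < n`), then `f` is a polynomial identity of `UT_r(K)`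
and is not a polynomial identity of `UT_{r+1}(K)`. -/
theorem identity_of_image_eq_pow_jacobson {K : Type*} [Field K] [Infinite K]
    (n r m : ℕ) (hn : 1 ≤ n) (hr : 1 ≤ r) (hrn : r < n) (hm : 1 ≤ m)
    (α : Equiv.Perm (Fin m) → K)
    (him : {y : Matrix (Fin n) (Fin n) K |
        ∃ a : Fin m → Matrix (Fin n) (Fin n) K, (∀ l, IsUT (a l)) ∧ mEval α a = y}
      = {M : Matrix (Fin n) (Fin n) K | InJpow r M}) :
    (∀ a : Fin m → Matrix (Fin r) (Fin r) K, (∀ l, IsUT (a l)) → mEval α a = 0) ∧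
      ¬ ∀ a : Fin m → Matrix (Fin (r + 1)) (Fin (r + 1)) K,
          (∀ l, IsUT (a l)) → mEval α a = 0 := by
  have hrle : r ≤ n := le_of_lt hrn
  have hr1le : r + 1 ≤ n := hrn
  constructor
  · intro a ha
    -- embed into UT_n
    have hmem : emb hrle (mEval α a) ∈
        {y : Matrix (Fin n) (Fin n) K |
          ∃ b : Fin m → Matrix (Fin n) (Fin n) K, (∀ l, IsUT (b l)) ∧ mEval α b = y} := by
      refine ⟨fun l => emb hrle (a l), fun l => emb_isUT hrle (ha l), ?_⟩
      exact mEval_emb hm hrle α a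
    rw [him] at hmem
    have hJ : InJpow r (emb hrle (mEval α a)) := hmem
    funext i j
    have := hJ (Fin.castLE hrle i) (Fin.castLE hrle j) (by simp; omega)
    rw [emb_castLE] at this
    simpa using this
  · intro hPI
    -- the matrix E_{0,r} lies in J^r, hence in the image
    set E : Matrix (Fin n) (Fin n) K :=
      fun i j => if (i : ℕ) = 0 ∧ (j : ℕ) = r then 1 else 0 with hE
    have hEJ : InJpow r E := by
      intro i j hij
      rw [hE]
      simp only
      rw [if_neg]
      rintro ⟨h1, h2⟩
      omega
    have hmem : E ∈ {y : Matrix (Fin n) (Fin n) K |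
        ∃ a : Fin m → Matrix (Fin n) (Fin n) K, (∀ l, IsUT (a l)) ∧ mEval α a = y} := by
      rw [him]; exact hEJ
    obtain ⟨a, ha, heval⟩ := hmem
    have hproj : mEval α (fun l => proj hr1le (a l)) = proj hr1le E := by
      rw [mEval_proj hr1le α a ha, heval]
    have h0 : mEval α (fun l => proj hr1le (a l)) = 0 :=
      hPI _ fun l => proj_isUT hr1le (ha l)
    rw [h0] at hproj
    have : proj hr1le E ⟨0, by omega⟩ ⟨r, by omega⟩ = (0 : K) := by rw [← hproj]; rfl
    rw [hE] at this
    simp [proj] at this
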